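/- Let E be a real inner product space, let h : E → ℝ be differentiable, fix c ∈ ℝ, and let φ : E × ℝ → ℝ be such that x ↦ φ(x, c) is differentiable with ⟪∇ₓφ(x, c), ∇h(x)⟫ = 0 for every x ∈ E, and x ↦ φ(x, c) is continuous. Let t : ℝ → E satisfy, for every s ≥ 0, t'(s) = −2·(h(t(s)) − c) • ∇h(t(s)), let t(0) = t*, and suppose the limit t' := lim_{s→∞} t(s) exists and satisfies h(t') = c. Then φ(t*, c) = φ(t', c) = φ(t', h(t')). In particular, the regression function m : E → ℝ defined by m(x) = φ(x, h(x)) satisfies m(t') = φ(t*, c), i.e., the conditional effect φ(t*, c) is identified by the value of the regression function at the surrogate intervention t'. -/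

import Mathlib

open scoped RealInnerProductSpace

/-- Identification of the conditional effect `φ(t*, c)` via the surrogate intervention
`t'` obtained as the limit of the gradient flow of `x ↦ (h x - c)²`, under the
C-red orthogonality condition stated at the level of the conditional effect. -/
theorem lode_identification
    {E : Type*} [NormedAddCommGroup E] [InnerProductSpace ℝ E] [CompleteSpace E]
    (h : E → ℝ) (gh : E → E)
    (hgrad_h : ∀ x, HasGradientAt h (gh x) x)
    (c : ℝ) (φ : E → ℝ → ℝ) (gφ : E → E)
    (hgrad_φ : ∀ x, HasGradientAt (fun y => φ y c) (gφ x) x)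
    (horth : ∀ x, ⟪gφ x, gh x⟫ = 0)
    (hcont : Continuous fun x => φ x c)
    (t : ℝ → E)
    (hflow : ∀ s : ℝ, 0 ≤ s →
      HasDerivAt t ((-(2 * (h (t s) - c))) • gh (t s)) s)
    (t' : E) (hlim : Filter.Tendsto t Filter.atTop (nhds t'))
    (hconf : h t' = c) :
    φ (t 0) c = φ t' c ∧ φ t' c = φ t' (h t') ∧
      (fun x => φ x (h x)) t' = φ (t 0) c := by
  set f : ℝ → ℝ := fun s => φ (t s) c with hf
  have hderiv : ∀ s : ℝ, 0 ≤ s → HasDerivAt f 0 s := by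
    intro s hs
    have h1 : HasDerivAt f
        (⟪gφ (t s), (-(2 * (h (t s) - c))) • gh (t s)⟫) s := by
      have := (hgrad_φ (t s)).hasFDerivAt.comp_hasDerivAt s (hflow s hs)
      simp at this ⊢
      exact this
    have h2 : (⟪gφ (t s), (-(2 * (h (t s) - c))) • gh (t s)⟫ : ℝ) = 0 := by
      rw [real_inner_smul_right, horth]
      ring
    rwa [h2] at h1
  have hconst : ∀ s : ℝ, 0 ≤ s → f s = f 0 := by
    intro s hs
    have := constant_of_has_deriv_right_zero (f := f) (a := 0) (b := s)
      (fun x hx => ((hderiv x hx.1).continuousAt).continuousWithinAt)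
      (fun x hx => (hderiv x hx.1).hasDerivWithinAt)
    exact this s (Set.right_mem_Icc.mpr hs)
  have htend : Filter.Tendsto f Filter.atTop (nhds (φ t' c)) :=
    ((hcont.tendsto t').comp hlim)
  have htend' : Filter.Tendsto f Filter.atTop (nhds (f 0)) := by
    have : f =ᶠ[Filter.atTop] fun _ => f 0 :=
      Filter.eventually_atTop.mpr ⟨0, fun s hs => hconst s hs⟩
    exact Filter.Tendsto.congr' this.symm tendsto_const_nhds
  have key : f 0 = φ t' c := tendsto_nhds_unique htend' htend
  refine ⟨key, by rw [hconf], ?_⟩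
  simp only [hconf]
  exact key.symm
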